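/- Let G be a flower group with pistil C₀ of order c₀ and petals C₁, …, C_k of orders c₁, …, c_k. Then there exist elements g₁, …, g_k with g_i a generator of C_i for each 1 ≤ i ≤ k, such that g_i^(c_i/c₀) = g_j^(c_j/c₀) for all 1 ≤ i < j ≤ k. -/

import Mathlib

/-- A cyclic subgroup `C` of `G` is a μ-subgroup if it is not contained in any cyclic
subgroup of `G` other than `C` itself. -/
def IsMuSubgroup {G : Type*} [Group G] (C : Subgroup G) : Prop :=
  IsCyclic ↥C ∧ ∀ K : Subgroup G, IsCyclic ↥K → C ≤ K → C = K

/-- A noncyclic group `G` is a flower group with pistil `C0` if any two distinct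
μ-subgroups of `G` intersect exactly in `C0`. -/
def IsFlowerGroup {G : Type*} [Group G] (C0 : Subgroup G) : Prop :=
  ¬ IsCyclic G ∧
    ∀ C C' : Subgroup G, IsMuSubgroup C → IsMuSubgroup C' → C ≠ C' → C ⊓ C' = C0

/-- A cyclic subgroup is generated (as `zpowers`) by one of its elements. -/
lemma cyclic_subgroup_gen {G : Type*} [Group G] {H : Subgroup G} (h : IsCyclic ↥H) :
    ∃ g : G, Subgroup.zpowers g = H := by
  obtain ⟨⟨g, hg⟩, hgen⟩ := h.exists_generator
  refine ⟨g, le_antisymm ((Subgroup.zpowers_le).mpr hg) ?_⟩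
  intro x hx
  obtain ⟨n, hn⟩ := Subgroup.mem_zpowers_iff.mp (hgen ⟨x, hx⟩)
  exact Subgroup.mem_zpowers_iff.mpr ⟨n, by simpa using congrArg Subtype.val hn⟩

lemma isCyclic_zpowers {G : Type*} [Group G] (g : G) : IsCyclic ↥(Subgroup.zpowers g) := by
  refine ⟨⟨⟨g, Subgroup.mem_zpowers g⟩, ?_⟩⟩
  rintro ⟨x, hx⟩
  obtain ⟨n, hn⟩ := Subgroup.mem_zpowers_iff.mp hx
  exact Subgroup.mem_zpowers_iff.mpr ⟨n, Subtype.ext (by simpa using hn)⟩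

/-- Every cyclic subgroup of a finite group is contained in a μ-subgroup. -/
lemma exists_mu_subgroup {G : Type*} [Group G] [Finite G] (H : Subgroup G)
    (hH : IsCyclic ↥H) : ∃ K : Subgroup G, IsMuSubgroup K ∧ H ≤ K := by
  classical
  haveI : Finite (Subgroup G) := Finite.of_injective _ SetLike.coe_injective
  set s : Set (Subgroup G) := {K | IsCyclic ↥K ∧ H ≤ K} with hs
  obtain ⟨K, hKs, hmax⟩ := Set.Finite.exists_maximalFor (fun K : Subgroup G => Nat.card K)
    s (Set.toFinite s) ⟨H, hH, le_rfl⟩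
  refine ⟨K, ⟨hKs.1, fun L hL hKL => ?_⟩, hKs.2⟩
  exact Subgroup.eq_of_le_of_card_ge hKL
    (hmax ⟨hL, hKs.2.trans hKL⟩ (Subgroup.card_le_of_le hKL))

/-- Every flower group has a compatible system of generators: generators
g_i of the petals C_i with g_i^(c_i/c₀) = g_j^(c_j/c₀) for all i, j. -/
theorem stmt11 {G : Type*} [Group G] [Finite G] (C0 : Subgroup G)
    (hG : IsFlowerGroup C0) (k : ℕ) (P : Fin k → Subgroup G)
    (hinj : Function.Injective P)
    (hpetals : ∀ C : Subgroup G, IsMuSubgroup C ↔ ∃ i, C = P i) :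
    ∃ g : Fin k → G, (∀ i, Subgroup.zpowers (g i) = P i) ∧
      ∀ i j, i < j →
        g i ^ (Nat.card (P i) / Nat.card C0) = g j ^ (Nat.card (P j) / Nat.card C0) := by
  classical
  obtain ⟨hnc, hinter⟩ := hG
  have hmu : ∀ i, IsMuSubgroup (P i) := fun i => (hpetals (P i)).mpr ⟨i, rfl⟩
  -- there is at least one petal
  obtain ⟨K0, hK0, -⟩ := exists_mu_subgroup (⊥ : Subgroup G) inferInstance
  obtain ⟨i0, hi0⟩ := (hpetals K0).mp hK0
  -- there are at least two petals
  have hk2 : ∀ i : Fin k, ∃ j : Fin k, j ≠ i := by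
    intro i
    by_contra hcon
    push_neg at hcon
    have htop : P i = ⊤ := by
      refine le_antisymm le_top ?_
      intro g _
      obtain ⟨K, hK, hle⟩ := exists_mu_subgroup (Subgroup.zpowers g) (isCyclic_zpowers g)
      obtain ⟨j, rfl⟩ := (hpetals K).mp hK
      rw [← hcon j]
      exact hle (Subgroup.mem_zpowers g)
    haveI : IsCyclic ↥(⊤ : Subgroup G) := htop ▸ (hmu i).1
    exact hnc (isCyclic_of_surjective Subgroup.topEquiv.toMonoidHom
      Subgroup.topEquiv.surjective)
  -- the pistil is contained in every petal
  have hC0le : ∀ i, C0 ≤ P i := by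
    intro i
    obtain ⟨j, hj⟩ := hk2 i
    have h := hinter (P j) (P i) (hmu j) (hmu i) (fun h => hj (hinj h))
    exact h ▸ inf_le_right
  -- the pistil is cyclic; pick a generator x
  haveI : IsCyclic ↥(P i0) := (hmu i0).1
  have hC0cyc : IsCyclic ↥C0 := isCyclic_of_surjective
    (Subgroup.subgroupOfEquivOfLe (hC0le i0)).toMonoidHom
    (Subgroup.subgroupOfEquivOfLe (hC0le i0)).surjective
  obtain ⟨x, hx⟩ := cyclic_subgroup_gen hC0cyc
  have hc0pos : 0 < Nat.card C0 := Nat.card_pos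
  have hordx : orderOf x = Nat.card C0 := by rw [← Nat.card_zpowers, hx]
  -- key claim: each petal has a generator whose (c_i/c0)-th power is x
  have key : ∀ i : Fin k, ∃ g : G, Subgroup.zpowers g = P i ∧
      g ^ (Nat.card (P i) / Nat.card C0) = x := by
    intro i
    obtain ⟨h, hh⟩ := cyclic_subgroup_gen (hmu i).1
    set c0 := Nat.card C0 with hc0
    set n := Nat.card (P i) with hn
    have hnpos : 0 < n := Nat.card_pos
    have hordh : orderOf h = n := by rw [← Nat.card_zpowers, hh]
    have hc0dvd : c0 ∣ n := Subgroup.card_dvd_of_le (hC0le i)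
    set u := h ^ (n / c0) with hu
    have hordu : orderOf u = c0 := by
      rw [hu, orderOf_pow, hordh, Nat.gcd_eq_right (Nat.div_dvd_of_dvd hc0dvd),
        Nat.div_div_self hc0dvd hnpos.ne']
    -- C0 is contained in zpowers u
    have hC0sub : C0 ≤ Subgroup.zpowers u := by
      intro y hy
      have hyP : y ∈ Subgroup.zpowers h := hh ▸ hC0le i hy
      obtain ⟨m, hm⟩ := (Submonoid.mem_powers_iff y h).mp
        (mem_powers_iff_mem_zpowers.mpr hyP)
      have hyc0 : y ^ c0 = 1 := by
        have h1 := pow_card_eq_one' (G := ↥C0) (x := ⟨y, hy⟩)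
        have h2 : ((⟨y, hy⟩ : ↥C0) : G) ^ Nat.card ↥C0 = 1 := by
          rw [← SubgroupClass.coe_pow, h1, OneMemClass.coe_one]
        exact h2
      have hdvd : n ∣ m * c0 := by
        rw [← hordh]
        exact orderOf_dvd_of_pow_eq_one (by rw [pow_mul, hm, hyc0])
      have hdvd' : n / c0 ∣ m := by
        have h1 : (n / c0) * c0 ∣ m * c0 := by
          rwa [Nat.div_mul_cancel hc0dvd]
        exact (Nat.mul_dvd_mul_iff_right hc0pos).mp h1
      obtain ⟨t, ht⟩ := hdvd'
      have hut : u ^ t = y := by rw [hu, ← pow_mul, ← ht, hm]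
      exact hut ▸ Subgroup.pow_mem _ (Subgroup.mem_zpowers u) t
    have hzu : Subgroup.zpowers u = C0 :=
      (Subgroup.eq_of_le_of_card_ge hC0sub (by rw [Nat.card_zpowers, hordu])).symm
    -- x is a power of u
    have hxmem : x ∈ Subgroup.zpowers u := hzu ▸ hx ▸ Subgroup.mem_zpowers x
    obtain ⟨s, hs⟩ := (Submonoid.mem_powers_iff x u).mp
      (mem_powers_iff_mem_zpowers.mpr hxmem)
    -- s is coprime to c0
    have hscop : Nat.Coprime s c0 := by
      have h1 : orderOf (u ^ s) = c0 := by rw [hs, hordx]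
      rw [orderOf_pow, hordu] at h1
      rcases Nat.div_eq_self.mp h1 with h2 | h2
      · omega
      · exact Nat.Coprime.symm h2
    -- lift s to a residue b mod n coprime to n
    haveI : NeZero n := ⟨hnpos.ne'⟩
    obtain ⟨b', hb'⟩ := ZMod.unitsMap_surjective hc0dvd (ZMod.unitOfCoprime s hscop)
    set b := (b' : ZMod n).val with hb
    have hbcop : Nat.Coprime b n := ZMod.val_coe_unit_coprime b'
    have hbs : b ≡ s [MOD c0] := by
      have h1 : ((b : ℕ) : ZMod c0) = (s : ZMod c0) := by
        have h2 : ((b : ℕ) : ZMod c0) = ZMod.castHom hc0dvd (ZMod c0) (b' : ZMod n) := by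
          rw [ZMod.castHom_apply, hb, ZMod.natCast_val]
        rw [h2]
        have h3 : (ZMod.unitsMap hc0dvd b' : ZMod c0)
            = ZMod.castHom hc0dvd (ZMod c0) (b' : ZMod n) := rfl
        rw [← h3, hb', ZMod.coe_unitOfCoprime]
      exact (ZMod.natCast_eq_natCast_iff _ _ _).mp h1
    refine ⟨h ^ b, ?_, ?_⟩
    · -- h ^ b still generates P i
      have hle : Subgroup.zpowers (h ^ b) ≤ P i := by
        rw [← hh]
        exact Subgroup.zpowers_le.mpr (Subgroup.mem_zpowers_iff.mpr ⟨(b : ℤ), zpow_natCast h b⟩)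
      refine Subgroup.eq_of_le_of_card_ge hle ?_
      have hgcd : Nat.gcd n b = 1 := hbcop.symm
      rw [Nat.card_zpowers, orderOf_pow, hordh, hgcd, Nat.div_one]
    · -- (h ^ b) ^ (n / c0) = x
      rw [← pow_mul, mul_comm, pow_mul, ← hu, ← hs]
      exact pow_eq_pow_iff_modEq.mpr (by rw [hordu]; exact hbs)
  choose g hg1 hg2 using key
  exact ⟨g, hg1, fun i j _ => (hg2 i).trans (hg2 j).symm⟩
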